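/- arXiv:2012.00488 — 4 statements merged into one kernel-verified Lean document; each statement's English description precedes it below -/
import Mathlib

section
/- If p_1 ≥ p_2 ≥ ... ≥ p_n are probabilities in [0,1] and v_1 ≥ v_2 ≥ ... ≥ v_n ≥ 0 are item values, then for any k ≤ n, Σ_{i=1}^n p_i v_i ≥ ((1/k) Σ_{i=1}^k p_i) · Σ_{i=1}^k v_i. -/
theorem stmt_6 (n k : ℕ) (hk : k ≤ n) (p v : ℕ → ℝ)
    (hp01 : ∀ i < n, 0 ≤ p i ∧ p i ≤ 1)
    (hpmono : ∀ i j, i ≤ j → j < n → p j ≤ p i)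
    (hv0 : ∀ i < n, 0 ≤ v i)
    (hvmono : ∀ i j, i ≤ j → j < n → v j ≤ v i) :
    (∑ i ∈ Finset.range n, p i * v i) ≥
      ((1 / (k : ℝ)) * ∑ i ∈ Finset.range k, p i) * ∑ i ∈ Finset.range k, v i := by
  rcases Nat.eq_zero_or_pos k with hk0 | hk0
  · subst hk0
    simp only [Finset.range_zero, Finset.sum_empty, mul_zero, ge_iff_le, le_refl,
      zero_mul]
    exact Finset.sum_nonneg fun i hi => mul_nonneg (hp01 i (Finset.mem_range.mp hi)).1
      (hv0 i (Finset.mem_range.mp hi))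
  have hmono : MonovaryOn p v (Finset.range k) := by
    intro i hi j hj hvij
    simp only [Finset.coe_range, Set.mem_Iio] at hi hj
    by_contra h
    push_neg at h
    rcases le_or_gt i j with hij | hij
    · exact absurd (hvmono i j hij (hj.trans_le hk)) (not_le.mpr hvij)
    · exact absurd (hpmono j i hij.le (hi.trans_le hk)) (not_le.mpr h)
  have cheb := hmono.sum_mul_sum_le_card_mul_sum
  simp only [Finset.card_range] at cheb
  have hkpos : (0:ℝ) < k := by exact_mod_cast hk0
  have h1 : ((1 / (k : ℝ)) * ∑ i ∈ Finset.range k, p i) * ∑ i ∈ Finset.range k, v i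
      ≤ ∑ i ∈ Finset.range k, p i * v i := by
    rw [one_div, mul_assoc, inv_mul_le_iff₀ hkpos]
    exact cheb
  refine le_trans h1 (Finset.sum_le_sum_of_subset_of_nonneg
    (Finset.range_subset_range.mpr hk) fun i hi _ => mul_nonneg
      (hp01 i (Finset.mem_range.mp hi)).1 (hv0 i (Finset.mem_range.mp hi)))
end

section
/- Let j ≥ 0 and r ≥ 2 be integers and y > 0 real. Define α_ℓ = C(j+r-1, ℓ+r-1) for 0 ≤ ℓ ≤ j and F(x) = −(Σ_{ℓ=0}^{j} α_ℓ·x^{j-ℓ}·y^ℓ) / (α_0·(r-1)·(x+y)^{r+j-1}). Then for all x ≥ 0, F'(x) = x^j/(x+y)^{r+j}. -/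
theorem stmt_12 (j r : ℕ) (hr : 2 ≤ r) (y : ℝ) (hy : 0 < y) :
    let α : ℕ → ℝ := fun ℓ => (Nat.choose (j + r - 1) (ℓ + r - 1) : ℝ)
    let F : ℝ → ℝ := fun x =>
      -(∑ ℓ ∈ Finset.range (j + 1), α ℓ * x ^ (j - ℓ) * y ^ ℓ) /
        (α 0 * ((r : ℝ) - 1) * (x + y) ^ (r + j - 1))
    ∀ x : ℝ, 0 ≤ x → HasDerivAt F (x ^ j / (x + y) ^ (r + j)) x := by
  intro α F x hx
  have hxy : (0:ℝ) < x + y := by linarith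
  have hα0 : (0:ℝ) < α 0 := by
    have h0 : 0 < Nat.choose (j + r - 1) (0 + r - 1) := Nat.choose_pos (by omega)
    simp only [α]
    exact_mod_cast h0
  have hrR : (2:ℝ) ≤ (r:ℝ) := by exact_mod_cast hr
  obtain ⟨k, hk⟩ : ∃ k, r + j - 1 = k + 1 := ⟨r + j - 2, by omega⟩
  -- derivative of numerator sum
  set P : ℝ := ∑ ℓ ∈ Finset.range (j + 1), α ℓ * x ^ (j - ℓ) * y ^ ℓ with hP_def
  set P' : ℝ := ∑ ℓ ∈ Finset.range (j + 1),
      α ℓ * (((j - ℓ : ℕ):ℝ) * x ^ (j - ℓ - 1)) * y ^ ℓ with hP'_def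
  have hP : HasDerivAt (fun x : ℝ => ∑ ℓ ∈ Finset.range (j + 1), α ℓ * x ^ (j - ℓ) * y ^ ℓ)
      P' x := by
    rw [hP'_def]
    apply HasDerivAt.fun_sum
    intro ℓ _
    simpa [mul_comm, mul_assoc, mul_left_comm] using
      (((hasDerivAt_pow (j - ℓ) x).const_mul (α ℓ)).mul_const (y ^ ℓ))
  have hD : HasDerivAt (fun x : ℝ => α 0 * ((r:ℝ) - 1) * (x + y) ^ (r + j - 1))
      (α 0 * ((r:ℝ) - 1) * (((r + j - 1 : ℕ):ℝ) * (x + y) ^ (r + j - 1 - 1))) x := by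
    have h1 := (((hasDerivAt_id x).add_const y).pow (r + j - 1)).const_mul (α 0 * ((r:ℝ) - 1))
    simpa [mul_comm, mul_assoc, mul_left_comm] using h1
  have hr1 : (0:ℝ) < (r:ℝ) - 1 := by linarith
  have hcpos : (0:ℝ) < α 0 * ((r:ℝ) - 1) := mul_pos hα0 hr1
  have hc : α 0 * ((r:ℝ) - 1) ≠ 0 := hcpos.ne'
  have hDne : α 0 * ((r:ℝ) - 1) * (x + y) ^ (r + j - 1) ≠ 0 :=
    (mul_pos hcpos (pow_pos hxy _)).ne'
  have hdiv := (hP.neg.div hD hDne)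
  convert hdiv using 1
  case e'_4 => rfl
  case e'_5 => rfl
  case e'_8 => rfl
  -- key identity
  have key : ((r + j - 1 : ℕ):ℝ) * P - (x + y) * P' = α 0 * ((r:ℝ) - 1) * x ^ j := by
    have step : ∀ ℓ ∈ Finset.range (j + 1),
        ((r + j - 1 : ℕ):ℝ) * (α ℓ * x ^ (j - ℓ) * y ^ ℓ)
          - (x + y) * (α ℓ * (((j - ℓ : ℕ):ℝ) * x ^ (j - ℓ - 1)) * y ^ ℓ)
        = ((r - 1 + ℓ : ℕ):ℝ) * α ℓ * x ^ (j - ℓ) * y ^ ℓ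
          - ((j - ℓ : ℕ):ℝ) * α ℓ * x ^ (j - ℓ - 1) * y ^ (ℓ + 1) := by
      intro ℓ hℓ
      have hℓj : ℓ ≤ j := by simpa [Nat.lt_succ_iff] using hℓ
      rcases eq_or_lt_of_le hℓj with h | h
      · have h0 : j - ℓ = 0 := by omega
        have h1 : r + j - 1 = r - 1 + ℓ := by omega
        rw [h0, h1]
        simp only [Nat.cast_zero, zero_mul, mul_zero, sub_zero, pow_zero, mul_one]
        ring
      · have hpow : x ^ (j - ℓ) = x ^ (j - ℓ - 1) * x := by
          rw [← pow_succ]; congr 1; omega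
        have hsplit : r + j - 1 = (r - 1 + ℓ) + (j - ℓ) := by omega
        rw [hsplit, hpow, Nat.cast_add, pow_succ]
        ring
    have hS2j : ((j - j : ℕ):ℝ) * α j * x ^ (j - j - 1) * y ^ (j + 1) = 0 := by
      simp [Nat.sub_self]
    have hterm : ∀ i ∈ Finset.range j,
        ((r - 1 + (i + 1) : ℕ):ℝ) * α (i + 1) * x ^ (j - (i + 1)) * y ^ (i + 1)
        = ((j - i : ℕ):ℝ) * α i * x ^ (j - i - 1) * y ^ (i + 1) := by
      intro i hi
      have hij : i < j := Finset.mem_range.mp hi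
      have hnat : Nat.choose (j + r - 1) ((i + 1) + r - 1) * (r - 1 + (i + 1))
          = Nat.choose (j + r - 1) (i + r - 1) * (j - i) := by
        have h := Nat.choose_succ_right_eq (j + r - 1) (i + r - 1)
        have h1 : i + r - 1 + 1 = (i + 1) + r - 1 := by omega
        have h2 : j + r - 1 - (i + r - 1) = j - i := by omega
        have h3 : r - 1 + (i + 1) = i + r - 1 + 1 := by omega
        rw [h1, h2] at h
        rw [h3, h1]
        exact h
      have hcast : ((r - 1 + (i + 1) : ℕ):ℝ) * α (i + 1) = ((j - i : ℕ):ℝ) * α i := by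
        simp only [α]
        have hnat' : (r - 1 + (i + 1)) * Nat.choose (j + r - 1) ((i + 1) + r - 1)
            = (j - i) * Nat.choose (j + r - 1) (i + r - 1) := by
          rw [mul_comm, mul_comm (j - i)]; exact hnat
        exact_mod_cast hnat'
      rw [show j - (i + 1) = j - i - 1 from by omega]
      calc ((r - 1 + (i + 1) : ℕ):ℝ) * α (i + 1) * x ^ (j - i - 1) * y ^ (i + 1)
          = (((r - 1 + (i + 1) : ℕ):ℝ) * α (i + 1)) * (x ^ (j - i - 1) * y ^ (i + 1)) := by ring
        _ = (((j - i : ℕ):ℝ) * α i) * (x ^ (j - i - 1) * y ^ (i + 1)) := by rw [hcast]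
        _ = ((j - i : ℕ):ℝ) * α i * x ^ (j - i - 1) * y ^ (i + 1) := by ring
    rw [hP_def, hP'_def, Finset.mul_sum, Finset.mul_sum, ← Finset.sum_sub_distrib,
      Finset.sum_congr rfl step, Finset.sum_sub_distrib,
      Finset.sum_range_succ' (fun ℓ => ((r - 1 + ℓ : ℕ):ℝ) * α ℓ * x ^ (j - ℓ) * y ^ ℓ) j,
      Finset.sum_range_succ (fun ℓ => ((j - ℓ : ℕ):ℝ) * α ℓ * x ^ (j - ℓ - 1) * y ^ (ℓ + 1)) j,
      Finset.sum_congr rfl hterm, hS2j]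
    have hr1c : ((r - 1 + 0 : ℕ):ℝ) = (r:ℝ) - 1 := by
      push_cast [Nat.cast_sub (by omega : 1 ≤ r)]
      ring
    rw [hr1c]
    simp only [Nat.sub_zero, pow_zero, mul_one, add_zero]
    ring
  -- final algebra
  rw [hk] at key ⊢
  rw [show r + j = k + 2 from by omega]
  rw [div_eq_div_iff (by positivity) (by rw [hk] at hDne; positivity)]
  simp only [Nat.add_sub_cancel, Pi.neg_apply, ← hP_def]
  linear_combination (-(α 0 * ((r:ℝ) - 1)) * (x + y) ^ (2 * k + 2)) * key
end

section
/- Let c ∈ (0,1), t, n natural numbers with t − 1 = c·n and t ≥ 3. Then the sum Σ_{i=t}^{n-1} (n−i)/((i−2)(i−1)) is bounded below by 1/c − ln(1/c) − 1 − 1/(c·t) and bounded above by 1/c − ln(1/c) − 1 + ξ, where ξ = (n−t+2)/(t−2)² + (n−t+1)/(t−1)². -/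
open Finset Real

lemma tel_sum (f : ℕ → ℝ) {m n : ℕ} (h : m ≤ n) :
    ∑ i ∈ Finset.Ico m n, (f (i + 1) - f i) = f n - f m := by
  induction n, h using Nat.le_induction with
  | base => simp
  | succ n hn ih => rw [Finset.sum_Ico_succ_top (by omega), ih]; ring

lemma log_lb' {a : ℝ} (ha : 0 < a) : 1 / (a + 1) ≤ Real.log (a + 1) - Real.log a := by
  have h1 : (0:ℝ) < a + 1 := by linarith
  have h2 : a / (a+1) - 1 = -(1/(a+1)) := by field_simp; ring
  have h3 := Real.log_le_sub_one_of_pos (show (0:ℝ) < a / (a+1) by positivity)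
  rw [Real.log_div (by linarith) (by linarith)] at h3
  linarith

lemma log_ub' {a : ℝ} (ha : 0 < a) : Real.log (a + 1) - Real.log a ≤ 1 / a := by
  have h3 := Real.log_le_sub_one_of_pos (show (0:ℝ) < (a+1) / a by positivity)
  rw [Real.log_div (by linarith) (by linarith)] at h3
  have h2 : (a+1)/a - 1 = 1/a := by field_simp; ring
  linarith

lemma final_lower (T N : ℝ) (h3 : 3 ≤ T) (hTN : T ≤ N) :
    N/(T-1) - (Real.log N - Real.log (T-1)) - N/((T-1)*T) ≤
      (N-2)/(T-2) - (Real.log (N-2) - Real.log (T-2)) := by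
  have hT1 : (0:ℝ) < T - 1 := by linarith
  have hT2 : (0:ℝ) < T - 2 := by linarith
  have hN0 : (0:ℝ) < N := by linarith
  have hN2 : (0:ℝ) < N - 2 := by linarith
  set a : ℝ := (N-2)/(T-2) with hadef
  set b : ℝ := N/(T-1) with hbdef
  have ha : 0 < a := by positivity
  have hb : 0 < b := by positivity
  have h1 : 1 - a/b ≤ (Real.log N - Real.log (T-1)) - (Real.log (N-2) - Real.log (T-2)) := by
    have h := Real.one_sub_inv_le_log_of_pos (show 0 < b/a by positivity)
    rw [inv_div, Real.log_div hb.ne' ha.ne', hadef, hbdef,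
      Real.log_div hN0.ne' hT1.ne', Real.log_div hN2.ne' hT2.ne'] at h
    exact h
  have hkey : T * ((2*T-2-N)*(N-T+1)) ≤ N^2*(T-2) := by
    nlinarith [sq_nonneg (3*T-3-2*N), sq_nonneg (N-T), sq_nonneg (N-T+1),
      mul_nonneg (sub_nonneg.2 hTN) (show (0:ℝ) ≤ T-2 by linarith)]
  have h2 : (b - a) * (b - 1) ≤ N/((T-1)*T) * b := by
    have e1 : (b - a)*(b-1) = ((2*T-2-N)*(N-T+1)) / ((T-1)^2*(T-2)) := by
      rw [hadef, hbdef]; field_simp; ring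
    have e2 : N/((T-1)*T) * b = N^2 / ((T-1)^2*T) := by
      rw [hbdef]; field_simp
    rw [e1, e2, div_le_div_iff₀ (by positivity) (by positivity)]
    nlinarith [mul_le_mul_of_nonneg_left hkey (sq_nonneg (T-1))]
  have h3' : b - 1 - a + a/b ≤ N/((T-1)*T) := by
    have e3 : b - 1 - a + a/b = ((b-a)*(b-1))/b := by field_simp; ring
    rw [e3, div_le_iff₀ hb]
    exact h2
  linarith

lemma final_upper (T N : ℝ) (h3 : 3 ≤ T) (hTN : T ≤ N) :
    (N-2)/(T-2) - (Real.log (N-1) - Real.log (T-1)) ≤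
      N/(T-1) - (Real.log N - Real.log (T-1)) +
        ((N-T+2)/(T-2)^2 + (N-T+1)/(T-1)^2) := by
  have hT1 : (0:ℝ) < T - 1 := by linarith
  have hT2 : (0:ℝ) < T - 2 := by linarith
  have hN1 : (0:ℝ) < N - 1 := by linarith
  have hlogn : Real.log N - Real.log (N-1) ≤ 1/(N-1) := by
    have h := log_ub' (a := N-1) (by linarith)
    rw [show N-1+1 = N by ring] at h
    exact h
  have hC1 : (N-T+2)/(T-2)^2 - ((N-2)/(T-2) - N/(T-1))
      = (N + (T-1)*(T-2))/((T-2)^2*(T-1)) := by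
    field_simp; ring
  have hC2 : 1/(N-1) ≤ (N + (T-1)*(T-2))/((T-2)^2*(T-1)) := by
    rw [div_le_div_iff₀ hN1 (by positivity)]
    nlinarith [mul_nonneg (sub_nonneg.2 hTN) (show (0:ℝ) ≤ (T-1)*(T-2) by positivity),
      mul_nonneg (sub_nonneg.2 hTN) (show (0:ℝ) ≤ T-2 by linarith)]
  have hC3 : (0:ℝ) ≤ (N-T+1)/(T-1)^2 := by
    apply div_nonneg (by linarith) (by positivity)
  linarith

theorem stmt_16 (c : ℝ) (hc0 : 0 < c) (hc1 : c < 1) (t n : ℕ)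
    (ht : (t : ℝ) - 1 = c * n) (ht3 : 3 ≤ t) :
    let ξ : ℝ := ((n : ℝ) - t + 2) / ((t : ℝ) - 2) ^ 2 +
      ((n : ℝ) - t + 1) / ((t : ℝ) - 1) ^ 2
    1 / c - Real.log (1 / c) - 1 - 1 / (c * t) ≤
        (∑ i ∈ Finset.Ico t n, ((n : ℝ) - i) / (((i : ℝ) - 2) * ((i : ℝ) - 1))) ∧
      (∑ i ∈ Finset.Ico t n, ((n : ℝ) - i) / (((i : ℝ) - 2) * ((i : ℝ) - 1))) ≤
        1 / c - Real.log (1 / c) - 1 + ξ := by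
  intro ξ
  have hξ : ξ = ((n : ℝ) - t + 2) / ((t : ℝ) - 2) ^ 2 +
      ((n : ℝ) - t + 1) / ((t : ℝ) - 1) ^ 2 := rfl
  have hT3 : (3:ℝ) ≤ (t:ℝ) := by exact_mod_cast ht3
  have hn0 : 0 < n := by
    rcases Nat.eq_zero_or_pos n with h | h
    · exfalso; subst h; push_cast at ht; linarith
    · exact h
  have hN0 : (0:ℝ) < (n:ℝ) := by exact_mod_cast hn0
  have htn : t ≤ n := by
    have h1 : (t:ℝ) - 1 < (n:ℝ) := by rw [ht]; nlinarith
    have h2 : t < n + 1 := by exact_mod_cast (show (t:ℝ) < ((n:ℝ) + 1) by linarith)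
    omega
  have hTN : (t:ℝ) ≤ (n:ℝ) := by exact_mod_cast htn
  have hc : c = ((t:ℝ) - 1) / n := by field_simp at ht ⊢; linarith
  have hT1 : (0:ℝ) < (t:ℝ) - 1 := by linarith
  have hT2 : (0:ℝ) < (t:ℝ) - 2 := by linarith
  have hN1 : (0:ℝ) < (n:ℝ) - 1 := by linarith
  have hN2 : (0:ℝ) < (n:ℝ) - 2 := by linarith
  have hinv : 1 / c = (n:ℝ) / ((t:ℝ) - 1) := by rw [hc, one_div, inv_div]
  have hict : 1 / (c * t) = (n:ℝ) / (((t:ℝ) - 1) * t) := by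
    rw [hc]; field_simp
  have hlogc : Real.log (1 / c) = Real.log (n:ℝ) - Real.log ((t:ℝ) - 1) := by
    rw [hinv, Real.log_div hN0.ne' hT1.ne']
  set U : ℝ := ∑ i ∈ Finset.Ico t n, 1 / ((i:ℝ) - 1) with hU
  have hterm : ∀ i ∈ Finset.Ico t n,
      ((n : ℝ) - i) / (((i : ℝ) - 2) * ((i : ℝ) - 1)) =
        ((n:ℝ) - 2) * ((fun j : ℕ => -1 / ((j:ℝ) - 2)) (i + 1)
          - (fun j : ℕ => -1 / ((j:ℝ) - 2)) i) - 1 / ((i:ℝ) - 1) := by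
    intro i hi
    simp only [Finset.mem_Ico] at hi
    have hi3 : (3:ℝ) ≤ (i:ℝ) := by
      have : 3 ≤ i := le_trans ht3 hi.1
      exact_mod_cast this
    have h1 : ((i:ℝ) - 2) ≠ 0 := by linarith
    have h2 : ((i:ℝ) - 1) ≠ 0 := by linarith
    simp only
    push_cast
    have h2' : (i:ℝ) + 1 - 2 ≠ 0 := by linarith
    field_simp
    ring
  have hS : (∑ i ∈ Finset.Ico t n, ((n : ℝ) - i) / (((i : ℝ) - 2) * ((i : ℝ) - 1)))
      = ((n:ℝ) - 2) / ((t:ℝ) - 2) - 1 - U := by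
    rw [Finset.sum_congr rfl hterm, Finset.sum_sub_distrib, ← Finset.mul_sum,
      tel_sum (fun j : ℕ => -1 / ((j:ℝ) - 2)) htn, hU]
    field_simp
    ring
  have hUub : U ≤ Real.log ((n:ℝ) - 2) - Real.log ((t:ℝ) - 2) := by
    have h1 : U ≤ ∑ i ∈ Finset.Ico t n,
        ((fun j : ℕ => Real.log ((j:ℝ) - 2)) (i + 1)
          - (fun j : ℕ => Real.log ((j:ℝ) - 2)) i) := by
      rw [hU]
      apply Finset.sum_le_sum
      intro i hi
      simp only [Finset.mem_Ico] at hi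
      have hi3 : (3:ℝ) ≤ (i:ℝ) := by
        have : 3 ≤ i := le_trans ht3 hi.1
        exact_mod_cast this
      simp only
      push_cast
      have h := log_lb' (a := (i:ℝ) - 2) (by linarith)
      rw [show (i:ℝ) + 1 - 2 = ((i:ℝ) - 2) + 1 by ring]
      calc 1 / ((i:ℝ) - 1) = 1 / (((i:ℝ) - 2) + 1) := by ring_nf
        _ ≤ _ := h
    rw [tel_sum (fun j : ℕ => Real.log ((j:ℝ) - 2)) htn] at h1
    exact h1
  have hUlb : Real.log ((n:ℝ) - 1) - Real.log ((t:ℝ) - 1) ≤ U := by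
    have h1 : ∑ i ∈ Finset.Ico t n,
        ((fun j : ℕ => Real.log ((j:ℝ) - 1)) (i + 1)
          - (fun j : ℕ => Real.log ((j:ℝ) - 1)) i) ≤ U := by
      rw [hU]
      apply Finset.sum_le_sum
      intro i hi
      simp only [Finset.mem_Ico] at hi
      have hi3 : (3:ℝ) ≤ (i:ℝ) := by
        have : 3 ≤ i := le_trans ht3 hi.1
        exact_mod_cast this
      simp only
      push_cast
      have h := log_ub' (a := (i:ℝ) - 1) (by linarith)
      rw [show (i:ℝ) + 1 - 1 = ((i:ℝ) - 1) + 1 by ring]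
      exact h
    rw [tel_sum (fun j : ℕ => Real.log ((j:ℝ) - 1)) htn] at h1
    exact h1
  constructor
  · rw [hS, hlogc, hinv, hict]
    have := final_lower (t:ℝ) (n:ℝ) hT3 hTN
    linarith
  · rw [hS, hlogc, hinv, hξ]
    have := final_upper (t:ℝ) (n:ℝ) hT3 hTN
    linarith
end

section
/- The function g(c) = c·ln(1/c) + (c²/2)·(1/c − ln(1/c) − 1) defined on (0,1) satisfies g(c) > 1/e for c = 0.3521; in particular g(0.3521) ≥ 0.4168. -/
theorem stmt_19 :
    let g : ℝ → ℝ := fun c =>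
      c * Real.log (1 / c) + c ^ 2 / 2 * (1 / c - Real.log (1 / c) - 1)
    g 0.3521 > 1 / Real.exp 1 ∧ g 0.3521 ≥ 0.4168 := by
  intro g
  have hexp_small : Real.exp 0.0436 ≤ 1.044569 := by
    have h := Real.exp_bound' (x := 0.0436) (by norm_num) (by norm_num) (n := 3) (by norm_num)
    rw [Finset.sum_range_succ, Finset.sum_range_succ, Finset.sum_range_succ,
      Finset.sum_range_zero] at h
    norm_num [Nat.factorial] at h
    linarith
  have hexp : Real.exp 1.0436 ≤ 1 / (0.3521 : ℝ) := by
    have : (1.0436 : ℝ) = 1 + 0.0436 := by norm_num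
    rw [this, Real.exp_add]
    have h1 : Real.exp 1 < 2.7182818286 := Real.exp_one_lt_d9
    have h2 : (0 : ℝ) < Real.exp 0.0436 := Real.exp_pos _
    nlinarith
  have hL : (1.0436 : ℝ) ≤ Real.log (1 / 0.3521) := by
    rw [Real.le_log_iff_exp_le (by norm_num)]
    exact hexp
  have hg : g 0.3521 ≥ 0.4168 := by
    show (0.3521 : ℝ) * Real.log (1 / 0.3521)
      + (0.3521 : ℝ) ^ 2 / 2 * (1 / 0.3521 - Real.log (1 / 0.3521) - 1) ≥ 0.4168
    nlinarith [hL]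
  refine ⟨?_, hg⟩
  have h1 : Real.exp 1 > 2.7182818283 := Real.exp_one_gt_d9
  have h2 : (0 : ℝ) < Real.exp 1 := Real.exp_pos 1
  have : 1 / Real.exp 1 < 0.368 := by
    rw [div_lt_iff₀ h2]; nlinarith
  linarith [hg]
end
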